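/- For the Vilenkin system on a bounded Vilenkin group with R := sup_k m_k, the Fejér kernels satisfy the pointwise estimate n·|K_n(x)| ≤ 2R² · Σ_{l=0}^{|n|} M_l·|K_{M_l}(x)| for every n ∈ ℕ₊ and x ∈ G_m, where |n| = max{ j : n_j ≠ 0 } in the Vilenkin digit expansion n = Σ n_j M_j. -/

import Mathlib

noncomputable section
open MeasureTheory Finset Filter

namespace VilPaper

instance (n : ℕ) : TopologicalSpace (ZMod n) := ⊥
instance (n : ℕ) : DiscreteTopology (ZMod n) := ⟨rfl⟩

variable (m : ℕ → ℕ)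

abbrev mseq (k : ℕ) : ℕ := m k + 2
abbrev G := ∀ k, ZMod (mseq m k)

instance : IsTopologicalAddGroup (G m) := by infer_instance
instance : CompactSpace (G m) := by infer_instance
instance : MeasurableSpace (G m) := borel _
instance : BorelSpace (G m) := ⟨rfl⟩

def μV : Measure (G m) := Measure.addHaarMeasure ⊤

/-- The generalized number system: `M_0 = 1`, `M_{k+1} = m_k M_k`. -/
def Mgen : ℕ → ℕ
  | 0 => 1
  | k + 1 => mseq m k * Mgen k

/-- The cylinder sets `I_n(x)`. -/
def cyl (n : ℕ) (x : G m) : Set (G m) := {y | ∀ i < n, y i = x i}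

/-- `I_n := I_n(0)`. -/
def Icyl (n : ℕ) : Set (G m) := cyl m n 0

/-- Generalized Rademacher functions `r_k(x) = exp(2πi x_k / m_k)`. -/
def rad (k : ℕ) (x : G m) : ℂ :=
  Complex.exp (2 * Real.pi * Complex.I * ((x k).val : ℂ) / (mseq m k : ℂ))

/-- The `j`-th digit `n_j` of `n` in the number system `(M_k)`. -/
def digit (n j : ℕ) : ℕ := n / Mgen m j % mseq m j

/-- `|n| = max { j : n_j ≠ 0 }`. -/
def ndeg (n : ℕ) : ℕ := sSup {j | digit m n j ≠ 0}

/-- The Vilenkin system `ψ_n = ∏ r_k^{n_k}`. -/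
def psi (n : ℕ) (x : G m) : ℂ := ∏ k ∈ Finset.range (n + 1), rad m k x ^ digit m n k

/-- Dirichlet kernels `D_n = ∑_{k<n} ψ_k`. -/
def Dker (n : ℕ) (x : G m) : ℂ := ∑ k ∈ Finset.range n, psi m k x

/-- Fejér kernels `K_n = (1/n) ∑_{k=1}^n D_k`. -/
def Kker (n : ℕ) (x : G m) : ℂ := (n : ℂ)⁻¹ * ∑ k ∈ Finset.range n, Dker m (k + 1) x

/-- Vilenkin–Fourier coefficients. -/
def fcoef (f : G m → ℂ) (k : ℕ) : ℂ := ∫ x, f x * (starRingEnd ℂ) (psi m k x) ∂ μV m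

/-- Partial sums `S_n f` of the Vilenkin–Fourier series. -/
def partialSum (f : G m → ℂ) (n : ℕ) (x : G m) : ℂ :=
  ∑ k ∈ Finset.range n, fcoef m f k * psi m k x

/-- Fejér means `σ_n f = (1/n) ∑_{k=1}^n S_k f`. -/
def fejer (f : G m → ℂ) (n : ℕ) (x : G m) : ℂ :=
  (n : ℂ)⁻¹ * ∑ k ∈ Finset.range n, partialSum m f (k + 1) x

/-- `Q_n = ∑_{k<n} q_k`. -/
def Qsum (q : ℕ → ℝ) (n : ℕ) : ℝ := ∑ k ∈ Finset.range n, q k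

/-- The `T` means `T_n f = (1/Q_n) ∑_{k<n} q_k S_k f`. -/
def Tmean (q : ℕ → ℝ) (f : G m → ℂ) (n : ℕ) (x : G m) : ℂ :=
  (Qsum q n : ℂ)⁻¹ * ∑ k ∈ Finset.range n, (q k : ℂ) * partialSum m f k x

/-- Convolution on `G_m`. -/
def conv (f g : G m → ℂ) (x : G m) : ℂ := ∫ t, f t * g (x - t) ∂ μV m

/-- The modulus of continuity `ω_p(δ, f) = sup_{t ∈ I_s, 1/M_s < δ} ‖f(·-t) - f‖_p`. -/
def omega (p : ENNReal) (f : G m → ℂ) (δ : ℝ) : ENNReal :=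
  ⨆ (s : ℕ) (_ : (1 : ℝ) / (Mgen m s : ℝ) < δ) (t : G m) (_ : t ∈ Icyl m s),
    eLpNorm (fun x => f (x - t) - f x) p (μV m)

/-- The Lipschitz class `Lip(α, p)`. -/
def LipClass (p : ENNReal) (α : ℝ) (f : G m → ℂ) : Prop :=
  MemLp f p (μV m) ∧ ∃ C : ℝ, ∀ δ : ℝ, 0 < δ → omega m p f δ ≤ ENNReal.ofReal (C * δ ^ α)


/-! ### Auxiliary lemmas for Statement 5 -/

section Aux

lemma two_le_mseq' (k : ℕ) : 2 ≤ mseq m k := by simp [mseq]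

lemma Mgen_pos' (j : ℕ) : 0 < Mgen m j := by
  induction j with
  | zero => simp [Mgen]
  | succ j ih => exact Nat.mul_pos (by simp [mseq]) ih

lemma two_pow_le_Mgen (j : ℕ) : 2 ^ j ≤ Mgen m j := by
  induction j with
  | zero => simp [Mgen]
  | succ j ih =>
    have : 2 * 2 ^ j ≤ mseq m j * Mgen m j :=
      Nat.mul_le_mul (two_le_mseq' m j) ih
    simpa [Mgen, pow_succ, mul_comm] using this

lemma Mgen_dvd {i j : ℕ} (h : i ≤ j) : Mgen m i ∣ Mgen m j := by
  induction h with
  | refl => exact dvd_rfl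
  | step h ih => exact dvd_mul_of_dvd_right ih _
    
lemma Mgen_succ_dvd {i j : ℕ} (h : i < j) : mseq m i * Mgen m i ∣ Mgen m j := by
  have : Mgen m (i+1) ∣ Mgen m j := Mgen_dvd m h
  simpa [Mgen] using this

lemma Mgen_mono {i j : ℕ} (h : i ≤ j) : Mgen m i ≤ Mgen m j :=
  Nat.le_of_dvd (Mgen_pos' m j) (Mgen_dvd m h)

lemma digit_eq_zero' {n j : ℕ} (h : n < Mgen m j) : digit m n j = 0 := by
  simp [digit, Nat.div_eq_of_lt h]

lemma digit_zero_of_gt {n k : ℕ} (h : n < k) : digit m n k = 0 := by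
  apply digit_eq_zero' m
  have h1 : k < 2 ^ k := Nat.lt_two_pow_self
  have h2 := two_pow_le_Mgen m k
  omega

lemma psi_eq_prod {n N : ℕ} (h : n < N) (x : G m) :
    psi m n x = ∏ k ∈ Finset.range N, rad m k x ^ digit m n k := by
  unfold psi
  apply Finset.prod_subset (Finset.range_subset_range.2 h)
  intro k hk hk'
  have hnk : n < k := by
    simp only [Finset.mem_range] at hk'
    omega
  rw [digit_zero_of_gt m hnk, pow_zero]

lemma digit_add_lt {q k i j : ℕ} (hij : i < j) :
    digit m (q * Mgen m j + k) i = digit m k i := by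
  obtain ⟨c, hc⟩ := Mgen_succ_dvd m hij
  unfold digit
  rw [hc]
  have h1 : q * (mseq m i * Mgen m i * c) + k = k + Mgen m i * (mseq m i * (q * c)) := by ring
  rw [h1, Nat.add_mul_div_left _ _ (Mgen_pos' m i), Nat.add_mul_mod_self_left]

lemma digit_qM_lt {q i j : ℕ} (hij : i < j) : digit m (q * Mgen m j) i = 0 := by
  have := digit_add_lt m (q := q) (k := 0) hij
  simpa [digit] using this

lemma digit_add_ge {q k i j : ℕ} (hk : k < Mgen m j) (hij : j ≤ i) :
    digit m (q * Mgen m j + k) i = digit m (q * Mgen m j) i := by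
  obtain ⟨c, hc⟩ := Mgen_dvd m hij
  unfold digit
  congr 1
  rw [hc, ← Nat.div_div_eq_div_mul, ← Nat.div_div_eq_div_mul]
  congr 1
  rw [mul_comm q, Nat.mul_add_div (Mgen_pos' m j), Nat.div_eq_of_lt hk,
    add_zero, Nat.mul_div_cancel_left _ (Mgen_pos' m j)]

lemma psi_mul {q k j : ℕ} (hk : k < Mgen m j) (x : G m) :
    psi m (q * Mgen m j + k) x = psi m (q * Mgen m j) x * psi m k x := by
  set N := q * Mgen m j + k + 1 with hN
  rw [psi_eq_prod m (show q * Mgen m j + k < N by omega) x,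
    psi_eq_prod m (show q * Mgen m j < N by omega) x,
    psi_eq_prod m (show k < N by omega) x, ← Finset.prod_mul_distrib]
  apply Finset.prod_congr rfl
  intro i _
  rcases lt_or_ge i j with h | h
  · rw [digit_add_lt m h, digit_qM_lt m h, pow_zero, one_mul]
  · rw [digit_add_ge m hk h, digit_eq_zero' m (lt_of_lt_of_le hk (Mgen_mono m h)),
      pow_zero, mul_one]

lemma psi_q_Mgen {q j : ℕ} (hq : q < mseq m j) (x : G m) :
    psi m (q * Mgen m j) x = rad m j x ^ q := by
  rcases Nat.eq_zero_or_pos q with rfl | hq0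
  · simp [psi, digit]
  · have hj : j ∈ Finset.range (q * Mgen m j + 1) := by
      have h1 : j < 2 ^ j := Nat.lt_two_pow_self
      have h2 := two_pow_le_Mgen m j
      have h3 : Mgen m j ≤ q * Mgen m j := Nat.le_mul_of_pos_left _ hq0
      simp only [Finset.mem_range]; omega
    unfold psi
    rw [Finset.prod_eq_single_of_mem j hj]
    · congr 1
      unfold digit
      rw [Nat.mul_div_cancel _ (Mgen_pos' m j), Nat.mod_eq_of_lt hq]
    · intro i _ hij
      rcases lt_or_gt_of_ne hij with h | h
      · rw [digit_qM_lt m h, pow_zero]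
      · have hlt : q * Mgen m j < Mgen m i :=
          calc q * Mgen m j < mseq m j * Mgen m j :=
                (Nat.mul_lt_mul_right (Mgen_pos' m j)).2 hq
            _ ≤ Mgen m i := Nat.le_of_dvd (Mgen_pos' m i) (Mgen_succ_dvd m h)
        rw [digit_eq_zero' m hlt, pow_zero]

lemma abs_rad (k : ℕ) (x : G m) : ‖rad m k x‖ = 1 := by
  unfold rad
  have h : 2 * (Real.pi : ℂ) * Complex.I * ((x k).val : ℂ) / (mseq m k : ℂ)
      = ((2 * Real.pi * ((x k).val : ℝ) / (mseq m k : ℝ) : ℝ) : ℂ) * Complex.I := by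
    push_cast
    ring
  rw [h, Complex.norm_exp_ofReal_mul_I]

lemma abs_psi (n : ℕ) (x : G m) : ‖psi m n x‖ = 1 := by
  unfold psi
  rw [norm_prod]
  apply Finset.prod_eq_one
  intro i _
  rw [norm_pow, abs_rad, one_pow]

lemma rad_eq_one_of_zero {k : ℕ} {x : G m} (h : x k = 0) : rad m k x = 1 := by
  unfold rad
  rw [h]
  simp [ZMod.val_zero]

lemma rad_pow_mseq (k : ℕ) (x : G m) : rad m k x ^ mseq m k = 1 := by
  unfold rad
  rw [← Complex.exp_nat_mul, Complex.exp_eq_one_iff]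
  refine ⟨((x k).val : ℤ), ?_⟩
  have hms : ((mseq m k : ℕ) : ℂ) ≠ 0 := Nat.cast_ne_zero.2 (by simp [mseq])
  rw [← mul_div_assoc, mul_div_cancel_left₀ _ hms]
  push_cast
  ring

lemma rad_ne_one {k : ℕ} {x : G m} (h : x k ≠ 0) : rad m k x ≠ 1 := by
  intro he
  unfold rad at he
  rw [Complex.exp_eq_one_iff] at he
  obtain ⟨t, ht⟩ := he
  have hms : (mseq m k : ℂ) ≠ 0 := Nat.cast_ne_zero.2 (by simp [mseq])
  have hπ : (Real.pi : ℂ) ≠ 0 := by exact_mod_cast Real.pi_ne_zero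
  have hI := Complex.I_ne_zero
  have h2 : (2 * (Real.pi : ℂ) * Complex.I) ≠ 0 :=
    mul_ne_zero (mul_ne_zero two_ne_zero hπ) hI
  have ht' : 2 * (Real.pi : ℂ) * Complex.I * ((x k).val : ℂ)
      = (t : ℂ) * (2 * (Real.pi : ℂ) * Complex.I) * (mseq m k : ℂ) := by
    rw [div_eq_iff hms] at ht
    exact ht
  have hv : ((x k).val : ℂ) = (t : ℂ) * (mseq m k : ℂ) := by
    apply mul_left_cancel₀ h2
    linear_combination ht'
  have hvz : ((x k).val : ℤ) = t * (mseq m k : ℤ) := by exact_mod_cast hv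
  have hlt : ((x k).val : ℤ) < (mseq m k : ℤ) := by
    exact_mod_cast ZMod.val_lt (x k)
  have hnn : (0:ℤ) ≤ ((x k).val : ℤ) := Int.ofNat_nonneg _
  have hcpos : (0:ℤ) < (mseq m k : ℤ) := by
    exact_mod_cast (by simp [mseq] : 0 < mseq m k)
  have hne : (x k).val ≠ 0 := fun h0 => h ((ZMod.val_eq_zero (x k)).1 h0)
  have hne' : ((x k).val : ℤ) ≠ 0 := by exact_mod_cast hne
  rcases lt_trichotomy t 0 with ht0 | rfl | ht0
  · have hmul : t * (mseq m k : ℤ) ≤ (-1) * (mseq m k : ℤ) :=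
      mul_le_mul_of_nonneg_right (by omega) hcpos.le
    linarith
  · have : ((x k).val : ℤ) = 0 := by rw [hvz]; ring
    exact hne' this
  · have hmul : 1 * (mseq m k : ℤ) ≤ t * (mseq m k : ℤ) :=
      mul_le_mul_of_nonneg_right (by omega) hcpos.le
    linarith

lemma sum_rad_pow {j : ℕ} {x : G m} (h : x j ≠ 0) :
    ∑ l ∈ Finset.range (mseq m j), rad m j x ^ l = 0 := by
  rw [geom_sum_eq (rad_ne_one m h), rad_pow_mseq, sub_self, zero_div]

lemma Dker_split {q k j : ℕ} (hk : k ≤ Mgen m j) (x : G m) :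
    Dker m (q * Mgen m j + k) x
      = Dker m (q * Mgen m j) x + psi m (q * Mgen m j) x * Dker m k x := by
  unfold Dker
  rw [Finset.sum_range_add, Finset.mul_sum]
  congr 1
  apply Finset.sum_congr rfl
  intro s hs
  exact psi_mul m (lt_of_lt_of_le (Finset.mem_range.1 hs) hk) x

lemma Dker_mul {i j : ℕ} (hi : i ≤ mseq m j) (x : G m) :
    Dker m (i * Mgen m j) x
      = (∑ l ∈ Finset.range i, rad m j x ^ l) * Dker m (Mgen m j) x := by
  induction i with
  | zero => simp [Dker]
  | succ i ih =>
    have hi' : i < mseq m j := hi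
    rw [show (i + 1) * Mgen m j = i * Mgen m j + Mgen m j by ring,
      Dker_split m (le_refl _) x, ih hi'.le, psi_q_Mgen m hi' x,
      Finset.sum_range_succ, add_mul]

lemma Dker_Mgen (j : ℕ) (x : G m) :
    Dker m (Mgen m j) x = if ∀ i < j, x i = 0 then (Mgen m j : ℂ) else 0 := by
  induction j with
  | zero =>
    have : Dker m (Mgen m 0) x = 1 := by
      simp [Mgen, Dker, psi, digit]
    rw [this, if_pos (fun i hi => absurd hi (Nat.not_lt_zero i))]
    simp [Mgen]
  | succ j ih =>
    have hM : Mgen m (j+1) = mseq m j * Mgen m j := rfl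
    rw [hM, Dker_mul m (le_refl _) x, ih]
    by_cases hj : ∀ i < j, x i = 0
    · by_cases hxj : x j = 0
      · have hcond : ∀ i < j + 1, x i = 0 := by
          intro i hi
          rcases Nat.lt_succ_iff_lt_or_eq.1 hi with h | h
          · exact hj i h
          · rw [h]; exact hxj
        rw [if_pos hj, if_pos hcond, rad_eq_one_of_zero m hxj]
        simp only [one_pow, Finset.sum_const, Finset.card_range, nsmul_eq_mul,
          mul_one]
        push_cast
        ring
      · have hcond : ¬ ∀ i < j + 1, x i = 0 := fun h => hxj (h j (by omega))
        rw [if_pos hj, if_neg hcond, sum_rad_pow m hxj, zero_mul]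
    · have hcond : ¬ ∀ i < j + 1, x i = 0 :=
        fun h => hj (fun i hi => h i (by omega))
      rw [if_neg hj, if_neg hcond, mul_zero]

lemma psi_eq_one_of_cyl {s j : ℕ} (hs : s < Mgen m j) {x : G m}
    (hx : ∀ i < j, x i = 0) : psi m s x = 1 := by
  unfold psi
  apply Finset.prod_eq_one
  intro i _
  rcases lt_or_ge i j with h | h
  · rw [rad_eq_one_of_zero m (hx i h), one_pow]
  · rw [digit_eq_zero' m (lt_of_lt_of_le hs (Mgen_mono m h)), pow_zero]

/-- `sumD m n x = ∑_{k=1}^n D_k(x) = n K_n(x)`. -/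
def sumD (n : ℕ) (x : G m) : ℂ := ∑ k ∈ Finset.range n, Dker m (k + 1) x

lemma mul_abs_Kker {n : ℕ} (hn : 1 ≤ n) (x : G m) :
    (n : ℝ) * ‖Kker m n x‖ = ‖sumD m n x‖ := by
  unfold Kker sumD
  rw [norm_mul, norm_inv, Complex.norm_natCast, ← mul_assoc,
    mul_inv_cancel₀ (show (n:ℝ) ≠ 0 from Nat.cast_ne_zero.2 (by omega)), one_mul]

lemma sumD_split {q k j : ℕ} (hk : k ≤ Mgen m j) (x : G m) :
    sumD m (q * Mgen m j + k) x
      = sumD m (q * Mgen m j) x + (k : ℂ) * Dker m (q * Mgen m j) x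
        + psi m (q * Mgen m j) x * sumD m k x := by
  unfold sumD
  rw [Finset.sum_range_add]
  have hterm : ∀ s ∈ Finset.range k,
      Dker m (q * Mgen m j + s + 1) x
        = Dker m (q * Mgen m j) x + psi m (q * Mgen m j) x * Dker m (s + 1) x := by
    intro s hs
    have hs' : s + 1 ≤ Mgen m j := le_trans (Finset.mem_range.1 hs) hk
    have : q * Mgen m j + s + 1 = q * Mgen m j + (s + 1) := by omega
    rw [this]
    exact Dker_split m hs' x
  rw [Finset.sum_congr rfl hterm, Finset.sum_add_distrib, Finset.sum_const,
    Finset.card_range, ← Finset.mul_sum, add_assoc]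
  congr 1
  congr 1
  simp [nsmul_eq_mul]

lemma abs_Dker_mul {i j : ℕ} (hi : i ≤ mseq m j) (x : G m) :
    ‖Dker m (i * Mgen m j) x‖
      ≤ (i : ℝ) * ‖Dker m (Mgen m j) x‖ := by
  rw [Dker_mul m hi x, norm_mul]
  have h1 : ‖∑ l ∈ Finset.range i, rad m j x ^ l‖ ≤ (i : ℝ) := by
    refine le_trans (norm_sum_le _ _) ?_
    have : ∀ l ∈ Finset.range i, ‖rad m j x ^ l‖ = 1 := by
      intro l _
      rw [norm_pow, abs_rad, one_pow]
    rw [Finset.sum_congr rfl this, Finset.sum_const, Finset.card_range]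
    simp
  exact mul_le_mul_of_nonneg_right h1 (norm_nonneg _)

lemma MD_le (j : ℕ) (x : G m) :
    (Mgen m j : ℝ) * ‖Dker m (Mgen m j) x‖
      ≤ 2 * ‖sumD m (Mgen m j) x‖ := by
  rw [Dker_Mgen]
  by_cases h : ∀ i < j, x i = 0
  · rw [if_pos h]
    have hsum : sumD m (Mgen m j) x
        = ((∑ k ∈ Finset.range (Mgen m j), (k + 1) : ℕ) : ℂ) := by
      unfold sumD
      push_cast
      apply Finset.sum_congr rfl
      intro k hk
      unfold Dker
      have : ∀ s ∈ Finset.range (k + 1), psi m s x = 1 := by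
        intro s hs
        apply psi_eq_one_of_cyl m _ h
        have h1 : s < k + 1 := Finset.mem_range.1 hs
        have h2 : k < Mgen m j := Finset.mem_range.1 hk
        omega
      rw [Finset.sum_congr rfl this]
      simp
    rw [hsum, Complex.norm_natCast, Complex.norm_natCast]
    have hgauss : (∑ k ∈ Finset.range (Mgen m j), (k + 1)) * 2
        = (Mgen m j + 1) * Mgen m j := by
      have h1 : (∑ k ∈ Finset.range (Mgen m j), (k + 1))
          = ∑ i ∈ Finset.range (Mgen m j + 1), i := by
        rw [Finset.sum_range_succ' (fun i => i) (Mgen m j)]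
        simp
      rw [h1, Finset.sum_range_id_mul_two]
      simp
    have hnat : Mgen m j * Mgen m j ≤ 2 * ∑ k ∈ Finset.range (Mgen m j), (k + 1) := by
      nlinarith [hgauss, Mgen_pos' m j]
    exact_mod_cast hnat
  · rw [if_neg h]
    rw [norm_zero, mul_zero]
    positivity

lemma sumD_mul_bound {i j : ℕ} (hi : i ≤ mseq m j) (x : G m) :
    ‖sumD m (i * Mgen m j) x‖
      ≤ (i : ℝ) ^ 2 * ‖sumD m (Mgen m j) x‖ := by
  induction i with
  | zero => simp [sumD]
  | succ i ih =>
    have hi' : i < mseq m j := hi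
    have key : sumD m ((i + 1) * Mgen m j) x
        = sumD m (i * Mgen m j) x + (Mgen m j : ℂ) * Dker m (i * Mgen m j) x
          + psi m (i * Mgen m j) x * sumD m (Mgen m j) x := by
      rw [show (i + 1) * Mgen m j = i * Mgen m j + Mgen m j by ring,
        sumD_split m (le_refl _) x]
    rw [key]
    set S := ‖sumD m (Mgen m j) x‖ with hS
    have hSnn : 0 ≤ S := norm_nonneg _
    have step1 : ‖sumD m (i * Mgen m j) x
        + (Mgen m j : ℂ) * Dker m (i * Mgen m j) x
        + psi m (i * Mgen m j) x * sumD m (Mgen m j) x‖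
        ≤ ‖sumD m (i * Mgen m j) x‖
          + ‖(Mgen m j : ℂ) * Dker m (i * Mgen m j) x‖
          + ‖psi m (i * Mgen m j) x * sumD m (Mgen m j) x‖ :=
      le_trans (norm_add_le _ _)
        (add_le_add_left (norm_add_le _ _) _)
    have h2 : ‖(Mgen m j : ℂ) * Dker m (i * Mgen m j) x‖
        ≤ 2 * (i : ℝ) * S := by
      rw [norm_mul, Complex.norm_natCast]
      calc (Mgen m j : ℝ) * ‖Dker m (i * Mgen m j) x‖
          ≤ (Mgen m j : ℝ) * ((i : ℝ) * ‖Dker m (Mgen m j) x‖) := by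
            apply mul_le_mul_of_nonneg_left (abs_Dker_mul m hi'.le x)
              (by positivity)
        _ = (i : ℝ) * ((Mgen m j : ℝ) * ‖Dker m (Mgen m j) x‖) := by
            ring
        _ ≤ (i : ℝ) * (2 * S) := by
            apply mul_le_mul_of_nonneg_left (MD_le m j x) (by positivity)
        _ = 2 * (i : ℝ) * S := by ring
    have h3 : ‖psi m (i * Mgen m j) x * sumD m (Mgen m j) x‖ = S := by
      rw [norm_mul, abs_psi, one_mul]
    calc ‖_‖ ≤ _ := step1
      _ ≤ (i : ℝ) ^ 2 * S + 2 * (i : ℝ) * S + S := by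
          exact add_le_add (add_le_add (ih hi'.le) h2) h3.le
      _ = ((i : ℝ) + 1) ^ 2 * S := by ring
      _ = ((i + 1 : ℕ) : ℝ) ^ 2 * S := by push_cast; ring

lemma ndeg_eq' {n j : ℕ} (h1 : Mgen m j ≤ n) (h2 : n < Mgen m (j + 1)) :
    ndeg m n = j := by
  have hM1 : Mgen m (j + 1) = mseq m j * Mgen m j := rfl
  have hdig : digit m n j ≠ 0 := by
    unfold digit
    have ha : 1 ≤ n / Mgen m j := (Nat.one_le_div_iff (Mgen_pos' m j)).2 h1
    have hb : n / Mgen m j < mseq m j := by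
      rw [Nat.div_lt_iff_lt_mul (Mgen_pos' m j), ← hM1]
      exact h2
    rw [Nat.mod_eq_of_lt hb]
    omega
  have hub : ∀ i ∈ {i | digit m n i ≠ 0}, i ≤ j := by
    intro i hi
    by_contra hij
    have h3 : Mgen m (j + 1) ≤ Mgen m i := Mgen_mono m (by omega)
    exact hi (digit_eq_zero' m (by omega))
  unfold ndeg
  apply le_antisymm
  · exact csSup_le ⟨j, hdig⟩ hub
  · exact le_csSup ⟨j, fun i hi => hub i hi⟩ hdig

lemma exists_ndeg {n : ℕ} (hn : 1 ≤ n) :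
    ∃ j, Mgen m j ≤ n ∧ n < Mgen m (j + 1) := by
  have hex : ∃ k, n < Mgen m k :=
    ⟨n, lt_of_lt_of_le (Nat.lt_two_pow_self) (two_pow_le_Mgen m n)⟩
  have hk0 : Nat.find hex ≠ 0 := by
    intro h0
    have := Nat.find_spec hex
    rw [h0] at this
    simp [Mgen] at this
    omega
  obtain ⟨j, hj⟩ := Nat.exists_eq_succ_of_ne_zero hk0
  refine ⟨j, ?_, ?_⟩
  · have := Nat.find_min hex (m := j) (by omega)
    omega
  · have := Nat.find_spec hex
    rw [hj] at this
    exact this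

set_option maxHeartbeats 2000000 in
lemma main_aux (R : ℕ) (hR : ∀ k, mseq m k ≤ R) (x : G m) :
    ∀ n, 1 ≤ n → ‖sumD m n x‖ ≤
      2 * (R : ℝ) ^ 2 *
        ∑ l ∈ Finset.range (ndeg m n + 1), ‖sumD m (Mgen m l) x‖ := by
  intro n
  induction n using Nat.strong_induction_on with
  | _ n IH =>
  intro hn
  obtain ⟨j, hj1, hj2⟩ := exists_ndeg m hn
  have hnd : ndeg m n = j := ndeg_eq' m hj1 hj2
  rw [hnd]
  have hM1 : Mgen m (j + 1) = mseq m j * Mgen m j := rfl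
  set a := n / Mgen m j with ha
  set r := n % Mgen m j with hrr
  have hsplit : a * Mgen m j + r = n := by
    rw [ha, hrr, mul_comm]
    exact Nat.div_add_mod n (Mgen m j)
  have ha1 : 1 ≤ a := (Nat.one_le_div_iff (Mgen_pos' m j)).2 hj1
  have ha2 : a < mseq m j := by
    rw [ha, Nat.div_lt_iff_lt_mul (Mgen_pos' m j), ← hM1]
    exact hj2
  have hr : r < Mgen m j := Nat.mod_lt _ (Mgen_pos' m j)
  have hRj : mseq m j ≤ R := hR j
  have haR : (a : ℝ) + 1 ≤ (R : ℝ) := by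
    have : a + 1 ≤ R := by omega
    exact_mod_cast this
  set S := ‖sumD m (Mgen m j) x‖ with hS
  have hSnn : 0 ≤ S := norm_nonneg _
  set T := ∑ l ∈ Finset.range j, ‖sumD m (Mgen m l) x‖ with hT
  have hTnn : 0 ≤ T := Finset.sum_nonneg (fun _ _ => norm_nonneg _)
  have hsum : ∑ l ∈ Finset.range (j + 1), ‖sumD m (Mgen m l) x‖
      = T + S := by
    rw [Finset.sum_range_succ]
  have key : sumD m n x
      = sumD m (a * Mgen m j) x + (r : ℂ) * Dker m (a * Mgen m j) x
        + psi m (a * Mgen m j) x * sumD m r x := by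
    have := sumD_split m (q := a) (k := r) hr.le x
    rwa [hsplit] at this
  rw [key]
  have step1 : ‖sumD m (a * Mgen m j) x
      + (r : ℂ) * Dker m (a * Mgen m j) x
      + psi m (a * Mgen m j) x * sumD m r x‖
      ≤ ‖sumD m (a * Mgen m j) x‖
        + ‖(r : ℂ) * Dker m (a * Mgen m j) x‖
        + ‖psi m (a * Mgen m j) x * sumD m r x‖ :=
    le_trans (norm_add_le _ _)
      (add_le_add_left (norm_add_le _ _) _)
  have h1 : ‖sumD m (a * Mgen m j) x‖ ≤ (a : ℝ) ^ 2 * S :=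
    sumD_mul_bound m ha2.le x
  have h2 : ‖(r : ℂ) * Dker m (a * Mgen m j) x‖ ≤ 2 * (a : ℝ) * S := by
    rw [norm_mul, Complex.norm_natCast]
    calc (r : ℝ) * ‖Dker m (a * Mgen m j) x‖
        ≤ (Mgen m j : ℝ) * ((a : ℝ) * ‖Dker m (Mgen m j) x‖) := by
          apply mul_le_mul (by exact_mod_cast hr.le) (abs_Dker_mul m ha2.le x)
            (norm_nonneg _) (Nat.cast_nonneg _)
      _ = (a : ℝ) * ((Mgen m j : ℝ) * ‖Dker m (Mgen m j) x‖) := by ring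
      _ ≤ (a : ℝ) * (2 * S) := by
          apply mul_le_mul_of_nonneg_left (MD_le m j x) (Nat.cast_nonneg _)
      _ = 2 * (a : ℝ) * S := by ring
  have h3 : ‖psi m (a * Mgen m j) x * sumD m r x‖
      = ‖sumD m r x‖ := by
    rw [norm_mul, abs_psi, one_mul]
  have hE : ‖sumD m r x‖ ≤ 2 * (R : ℝ) ^ 2 * T := by
    rcases Nat.eq_zero_or_pos r with hr0 | hr0
    · have h0 : sumD m 0 x = 0 := by simp [sumD]
      rw [hr0, h0, norm_zero]
      exact mul_nonneg (mul_nonneg zero_le_two (sq_nonneg _)) hTnn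
    · obtain ⟨j', hj'1, hj'2⟩ := exists_ndeg m hr0
      have hjj : j' < j := by
        by_contra hcon
        have : Mgen m j ≤ Mgen m j' := Mgen_mono m (by omega)
        omega
      have hrn : r < n := by omega
      have := IH r hrn hr0
      rw [ndeg_eq' m hj'1 hj'2] at this
      refine le_trans this ?_
      apply mul_le_mul_of_nonneg_left _ (mul_nonneg zero_le_two (sq_nonneg _))
      apply Finset.sum_le_sum_of_subset_of_nonneg
        (Finset.range_subset_range.2 (by omega))
      intro _ _ _
      exact norm_nonneg _
  have hcoef : (a : ℝ) ^ 2 * S + 2 * (a : ℝ) * S ≤ 2 * (R : ℝ) ^ 2 * S := by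
    have hanneg : (0:ℝ) ≤ (a : ℝ) := Nat.cast_nonneg a
    have hsq : ((a:ℝ) + 1) ^ 2 ≤ (R:ℝ) ^ 2 := by nlinarith [haR, hanneg]
    nlinarith [mul_le_mul_of_nonneg_right hsq hSnn,
      mul_nonneg (sq_nonneg (R:ℝ)) hSnn, hSnn]
  calc ‖_‖ ≤ _ := step1
    _ ≤ (a : ℝ) ^ 2 * S + 2 * (a : ℝ) * S + 2 * (R : ℝ) ^ 2 * T := by
        exact add_le_add (add_le_add h1 h2) (h3 ▸ hE)
    _ ≤ 2 * (R : ℝ) ^ 2 * S + 2 * (R : ℝ) ^ 2 * T := by linarith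
    _ = 2 * (R : ℝ) ^ 2 * (T + S) := by ring
    _ = 2 * (R : ℝ) ^ 2 *
        ∑ l ∈ Finset.range (j + 1), ‖sumD m (Mgen m l) x‖ := by
        rw [hsum]

end Aux

/-- pointwise estimate `n|K_n| ≤ 2R² ∑_{l=0}^{|n|} M_l |K_{M_l}|`. -/
theorem fejer_kernel_pointwise (m : ℕ → ℕ) (R : ℕ) (hR : ∀ k, mseq m k ≤ R)
    (n : ℕ) (hn : 1 ≤ n) (x : G m) :
    (n : ℝ) * ‖Kker m n x‖ ≤
      2 * (R : ℝ) ^ 2 *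
        ∑ l ∈ Finset.range (ndeg m n + 1),
          (Mgen m l : ℝ) * ‖Kker m (Mgen m l) x‖ := by
  have hmain := main_aux m R hR x n hn
  rw [← mul_abs_Kker m hn x] at hmain
  refine le_trans hmain ?_
  apply mul_le_mul_of_nonneg_left _ (by positivity)
  apply Finset.sum_le_sum
  intro l _
  rw [mul_abs_Kker m (Mgen_pos' m l) x]

end VilPaper
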